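/- Let G be a vertex-minimal non-(1_1,...,1_a,0_1,...,0_b)-colorable graph (a ≥ 1) and let F ⊊ V(G) be any proper subset. Then there exists a nonempty set H ⊆ V(G) − F such that every v ∈ H has at least max{a − h(v), 0} neighbors in F and at least a + b − h(v) neighbors in H ∪ F, where h(v) = deg(v) − (a+b). -/

import Mathlib

/-- `G` is `(1_1,…,1_a,0_1,…,0_b)`-colorable: `a + b` colors, the first `a` classes induce
subgraphs of maximum degree at most `1`, the last `b` classes are independent sets. -/
def DColorable {V : Type*} (G : SimpleGraph V) (a b : ℕ) : Prop :=
  ∃ f : V → Fin (a + b),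
    (∀ v, (f v : ℕ) < a → {w | G.Adj v w ∧ f w = f v}.Subsingleton) ∧
    (∀ v, a ≤ (f v : ℕ) → ∀ w, G.Adj v w → f w ≠ f v)

namespace Stmt12

open Finset

variable {V : Type*} [Fintype V] [DecidableEq V]

/-- A partial coloring of `G` leaving `w` uncolored. -/
def PCol (G : SimpleGraph V) (a b : ℕ) (w : V) (f : V → Fin (a + b)) : Prop :=
  (∀ v, v ≠ w → (f v : ℕ) < a → ∀ x y, x ≠ w → y ≠ w → G.Adj v x → G.Adj v y →
      f x = f v → f y = f v → x = y) ∧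
  (∀ v, v ≠ w → a ≤ (f v : ℕ) → ∀ x, x ≠ w → G.Adj v x → f x ≠ f v)

open Classical in
/-- Vertices outside `F` that are `1`-saturated in the partial coloring `(w, f)`. -/
noncomputable def satSet (G : SimpleGraph V) [DecidableRel G.Adj] (a b : ℕ) (F : Finset V)
    (w : V) (f : V → Fin (a + b)) : Finset V :=
  Finset.univ.filter fun z => z ∉ F ∧ z ≠ w ∧ (f z : ℕ) < a ∧
    ∃ x, x ≠ w ∧ x ≠ z ∧ G.Adj z x ∧ f x = f z

lemma mem_satSet {G : SimpleGraph V} [DecidableRel G.Adj] {a b : ℕ} {F : Finset V} {w : V}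
    {f : V → Fin (a + b)} {z : V} :
    z ∈ satSet G a b F w f ↔ z ∉ F ∧ z ≠ w ∧ (f z : ℕ) < a ∧
      ∃ x, x ≠ w ∧ x ≠ z ∧ G.Adj z x ∧ f x = f z := by
  simp [satSet]

lemma exists_pcol (G : SimpleGraph V) (a b : ℕ) (ha : 1 ≤ a)
    (hmin : ∀ v : V, DColorable (G.induce {v}ᶜ) a b) (w : V) :
    ∃ f, PCol G a b w f := by
  obtain ⟨f₀, h1, h2⟩ := hmin w
  have hmem : ∀ x : V, x ≠ w → x ∈ ({w}ᶜ : Set V) := fun x hx => by simp [hx]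
  refine ⟨fun x => if h : x = w then ⟨0, by omega⟩ else f₀ ⟨x, hmem x h⟩, ?_, ?_⟩
  · intro v hv hva x y hx hy hax hay hfx hfy
    simp only [dif_neg hv, dif_neg hx, dif_neg hy] at hva hfx hfy
    have h1' := h1 ⟨v, hmem v hv⟩ hva
    have hxmem : (⟨x, hmem x hx⟩ : ({w}ᶜ : Set V)) ∈
        {w' | (G.induce {w}ᶜ).Adj ⟨v, hmem v hv⟩ w' ∧ f₀ w' = f₀ ⟨v, hmem v hv⟩} :=
      ⟨by simpa using hax, hfx⟩
    have hymem : (⟨y, hmem y hy⟩ : ({w}ᶜ : Set V)) ∈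
        {w' | (G.induce {w}ᶜ).Adj ⟨v, hmem v hv⟩ w' ∧ f₀ w' = f₀ ⟨v, hmem v hv⟩} :=
      ⟨by simpa using hay, hfy⟩
    exact congrArg Subtype.val (h1' hxmem hymem)
  · intro v hv hva x hx hax hfx
    simp only [dif_neg hv, dif_neg hx] at hva hfx
    exact h2 ⟨v, hmem v hv⟩ hva ⟨x, hmem x hx⟩ (by simpa using hax) hfx

section Steps

variable {G : SimpleGraph V} [DecidableRel G.Adj] {a b : ℕ} {v : V} {f : V → Fin (a + b)}

omit [Fintype V] in
/-- If some color is missing from the neighborhood of the uncolored vertex, `G` is colorable. -/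
lemma step_A (hP : PCol G a b v f) (hnc : ¬ DColorable G a b) (c : Fin (a + b))
    (hempty : ∀ x, G.Adj v x → f x ≠ c) : False := by
  apply hnc
  set g := Function.update f v c with hg
  have hgv : g v = c := Function.update_self v c f
  have hgx : ∀ x, x ≠ v → g x = f x := fun x hx => Function.update_of_ne hx c f
  refine ⟨g, ?_, ?_⟩
  · intro z hz x hx y hy
    obtain ⟨hax, hfx⟩ := hx
    obtain ⟨hay, hfy⟩ := hy
    by_cases hzv : z = v
    · exfalso
      rw [hzv] at hax
      exact hempty x hax (by rw [← hgx x hax.ne', hfx, hzv, hgv])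
    · have hzz : g z = f z := hgx z hzv
      have hxv : x ≠ v := by
        intro h
        rw [h] at hax hfx
        rw [hgv, hzz] at hfx
        exact hempty z hax.symm hfx.symm
      have hyv : y ≠ v := by
        intro h
        rw [h] at hay hfy
        rw [hgv, hzz] at hfy
        exact hempty z hay.symm hfy.symm
      exact hP.1 z hzv (hzz ▸ hz) x y hxv hyv hax hay
        (by rw [← hgx x hxv, hfx, hzz]) (by rw [← hgx y hyv, hfy, hzz])
  · intro z hz x hax hfx
    by_cases hzv : z = v
    · rw [hzv] at hax
      exact hempty x hax (by rw [← hgx x hax.ne', hfx, hzv, hgv])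
    · have hzz : g z = f z := hgx z hzv
      by_cases hxv : x = v
      · rw [hxv, hgv] at hfx
        rw [hxv] at hax
        exact hempty z hax.symm (by rw [← hzz, ← hfx])
      · exact hP.2 z hzv (hzz ▸ hz) x hxv hax (by rw [← hgx x hxv, ← hzz]; exact hfx)

omit [Fintype V] in
/-- If a `1`-class color appears on exactly one, unsaturated, neighbor, `G` is colorable. -/
lemma step_C (hP : PCol G a b v f) (hnc : ¬ DColorable G a b) (c : Fin (a + b))
    (hc : (c : ℕ) < a) {u : V} (hadj : G.Adj v u) (hfu : f u = c)
    (huniq : ∀ x, G.Adj v x → f x = c → x = u)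
    (hunsat : ∀ x, x ≠ v → x ≠ u → G.Adj u x → f x ≠ c) : False := by
  apply hnc
  set g := Function.update f v c with hg
  have hgv : g v = c := Function.update_self v c f
  have hgx : ∀ x, x ≠ v → g x = f x := fun x hx => Function.update_of_ne hx c f
  have huv : u ≠ v := hadj.ne'
  refine ⟨g, ?_, ?_⟩
  · intro z hz x hx y hy
    obtain ⟨hax, hfx⟩ := hx
    obtain ⟨hay, hfy⟩ := hy
    by_cases hzv : z = v
    · rw [hzv] at hax hay hfx hfy
      rw [hgv] at hfx hfy
      have hxu : x = u := huniq x hax (by rw [← hgx x hax.ne', hfx])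
      have hyu : y = u := huniq y hay (by rw [← hgx y hay.ne', hfy])
      rw [hxu, hyu]
    · have hzz : g z = f z := hgx z hzv
      by_cases hzu : z = u
      · -- all members of the class of `u` equal `v`
        have key : ∀ t, G.Adj z t → g t = g z → t = v := by
          intro t hat hft
          by_contra htv
          have htz : t ≠ z := hat.ne'
          rw [hzu] at hat htz
          exact hunsat t htv htz hat
            (by rw [← hgx t htv, hft, hzz, hzu, hfu])
        rw [key x hax hfx, key y hay hfy]
      · have hxv : x ≠ v := by
          intro h
          rw [h] at hax hfx
          rw [hgv, hzz] at hfx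
          exact hzu (huniq z hax.symm hfx.symm)
        have hyv : y ≠ v := by
          intro h
          rw [h] at hay hfy
          rw [hgv, hzz] at hfy
          exact hzu (huniq z hay.symm hfy.symm)
        exact hP.1 z hzv (hzz ▸ hz) x y hxv hyv hax hay
          (by rw [← hgx x hxv, hfx, hzz]) (by rw [← hgx y hyv, hfy, hzz])
  · intro z hz x hax hfx
    have hzv : z ≠ v := by
      intro h
      rw [h, hgv] at hz
      omega
    have hzz : g z = f z := hgx z hzv
    by_cases hxv : x = v
    · rw [hxv, hgv] at hfx
      rw [hxv] at hax
      have hzu : z = u := huniq z hax.symm (by rw [← hzz, ← hfx])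
      rw [hzz, hzu, hfu] at hz
      omega
    · exact hP.2 z hzv (hzz ▸ hz) x hxv hax (by rw [← hgx x hxv, ← hzz]; exact hfx)

/-- If a `1`-class color appears on exactly one (hence saturated) neighbor `u` outside `F`,
we can move the hole to `u`, decreasing the number of saturated vertices: contradiction. -/
lemma step_D {F : Finset V} (hP : PCol G a b v f) (hnc : ¬ DColorable G a b)
    (hmincost : ∀ w g, w ∉ F → PCol G a b w g →
      (satSet G a b F v f).card ≤ (satSet G a b F w g).card)
    (c : Fin (a + b)) (hc : (c : ℕ) < a) {u : V} (hadj : G.Adj v u) (hfu : f u = c)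
    (huniq : ∀ x, G.Adj v x → f x = c → x = u) (huF : u ∉ F) : False := by
  have hsat : ∃ x, x ≠ v ∧ x ≠ u ∧ G.Adj u x ∧ f x = c := by
    by_contra h
    push_neg at h
    exact step_C hP hnc c hc hadj hfu huniq (fun x h1 h2 h3 => h x h1 h2 h3)
  set g := Function.update f v c with hg
  have hgv : g v = c := Function.update_self v c f
  have hgx : ∀ x, x ≠ v → g x = f x := fun x hx => Function.update_of_ne hx c f
  have huv : u ≠ v := hadj.ne'
  have hPg : PCol G a b u g := by
    constructor
    · intro z hzu hz x y hxu hyu hax hay hfx hfy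
      by_cases hzv : z = v
      · exfalso
        rw [hzv] at hax hfx
        rw [hgv] at hfx
        exact hxu (huniq x hax (by rw [← hgx x hax.ne', hfx]))
      · have hzz : g z = f z := hgx z hzv
        have hxv : x ≠ v := by
          intro h
          rw [h] at hax hfx
          rw [hgv, hzz] at hfx
          exact hzu (huniq z hax.symm hfx.symm)
        have hyv : y ≠ v := by
          intro h
          rw [h] at hay hfy
          rw [hgv, hzz] at hfy
          exact hzu (huniq z hay.symm hfy.symm)
        exact hP.1 z hzv (hzz ▸ hz) x y hxv hyv hax hay
          (by rw [← hgx x hxv, hfx, hzz]) (by rw [← hgx y hyv, hfy, hzz])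
    · intro z hzu hz x hxu hax hfx
      have hzv : z ≠ v := by
        intro h
        rw [h, hgv] at hz
        omega
      have hzz : g z = f z := hgx z hzv
      by_cases hxv : x = v
      · rw [hxv, hgv] at hfx
        rw [hxv] at hax
        exact hzu (huniq z hax.symm (by rw [← hzz, ← hfx]))
      · exact hP.2 z hzv (hzz ▸ hz) x hxv hax (by rw [← hgx x hxv, ← hzz]; exact hfx)
  have husat : u ∈ satSet G a b F v f := by
    rw [mem_satSet]
    obtain ⟨x, hx1, hx2, hx3, hx4⟩ := hsat
    exact ⟨huF, huv, by rw [hfu]; exact hc, x, hx1, hx2, hx3, by rw [hx4, hfu]⟩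
  have hsub : satSet G a b F u g ⊆ (satSet G a b F v f).erase u := by
    intro z hz
    rw [mem_satSet] at hz
    obtain ⟨hz1, hz2, hz3, x, hx1, hx2, hx3, hx4⟩ := hz
    have hzv : z ≠ v := by
      intro h
      rw [h] at hx2 hx3 hx4
      rw [hgv] at hx4
      exact hx1 (huniq x hx3 (by rw [← hgx x hx2, hx4]))
    have hzz : g z = f z := hgx z hzv
    have hxv : x ≠ v := by
      intro h
      rw [h] at hx3 hx4
      rw [hgv, hzz] at hx4
      exact hz2 (huniq z hx3.symm hx4.symm)
    rw [Finset.mem_erase, mem_satSet]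
    exact ⟨hz2, hz1, hzv, hzz ▸ hz3, x, hxv, hx2, hx3,
      by rw [← hgx x hxv, ← hzz]; exact hx4⟩
  have h1 : (satSet G a b F u g).card < (satSet G a b F v f).card :=
    lt_of_le_of_lt (Finset.card_le_card hsub) (Finset.card_erase_lt_of_mem husat)
  exact absurd (hmincost u g huF hPg) (not_le.mpr h1)

/-- If a `0`-class color appears on exactly one neighbor `u`, we can move the hole to `u`
without increasing the number of saturated vertices. -/
lemma step_E {F : Finset V} (hP : PCol G a b v f)
    (c : Fin (a + b)) (hc : a ≤ (c : ℕ)) {u : V} (hadj : G.Adj v u) (hfu : f u = c)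
    (huniq : ∀ x, G.Adj v x → f x = c → x = u) :
    ∃ g, PCol G a b u g ∧ satSet G a b F u g ⊆ satSet G a b F v f := by
  set g := Function.update f v c with hg
  have hgv : g v = c := Function.update_self v c f
  have hgx : ∀ x, x ≠ v → g x = f x := fun x hx => Function.update_of_ne hx c f
  have huv : u ≠ v := hadj.ne'
  refine ⟨g, ⟨?_, ?_⟩, ?_⟩
  · intro z hzu hz x y hxu hyu hax hay hfx hfy
    have hzv : z ≠ v := by
      intro h
      rw [h, hgv] at hz
      omega
    have hzz : g z = f z := hgx z hzv
    have hza : (f z : ℕ) < a := hzz ▸ hz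
    have hxv : x ≠ v := by
      intro h
      rw [h, hgv] at hfx
      have := congrArg Fin.val (hfx.trans hzz)
      omega
    have hyv : y ≠ v := by
      intro h
      rw [h, hgv] at hfy
      have := congrArg Fin.val (hfy.trans hzz)
      omega
    exact hP.1 z hzv hza x y hxv hyv hax hay
      (by rw [← hgx x hxv, hfx, hzz]) (by rw [← hgx y hyv, hfy, hzz])
  · intro z hzu hz x hxu hax hfx
    by_cases hzv : z = v
    · rw [hzv] at hax hfx
      rw [hgv] at hfx
      exact hxu (huniq x hax (by rw [← hgx x hax.ne', hfx]))
    · have hzz : g z = f z := hgx z hzv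
      by_cases hxv : x = v
      · rw [hxv, hgv] at hfx
        rw [hxv] at hax
        exact hzu (huniq z hax.symm (by rw [← hzz, ← hfx]))
      · exact hP.2 z hzv (hzz ▸ hz) x hxv hax (by rw [← hgx x hxv, ← hzz]; exact hfx)
  · intro z hz
    rw [mem_satSet] at hz
    obtain ⟨hz1, hz2, hz3, x, hx1, hx2, hx3, hx4⟩ := hz
    have hzv : z ≠ v := by
      intro h
      rw [h, hgv] at hz3
      omega
    have hzz : g z = f z := hgx z hzv
    have hza : (f z : ℕ) < a := hzz ▸ hz3
    have hxv : x ≠ v := by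
      intro h
      rw [h, hgv] at hx4
      have := congrArg Fin.val (hx4.trans hzz)
      omega
    rw [mem_satSet]
    exact ⟨hz1, hzv, hza, x, hxv, hx2, hx3, by rw [← hgx x hxv, ← hzz]; exact hx4⟩

end Steps

lemma card_low (a b : ℕ) :
    (Finset.univ.filter fun c : Fin (a + b) => (c : ℕ) < a).card = a := by
  have he : (Finset.univ.filter fun c : Fin (a + b) => (c : ℕ) < a)
      = (Finset.range a).attachFin
        (fun m hm => lt_of_lt_of_le (Finset.mem_range.mp hm) (Nat.le_add_right a b)) := by
    ext c
    simp [Finset.mem_attachFin, Finset.mem_range]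
  rw [he, Finset.card_attachFin, Finset.card_range]

end Stmt12

theorem stmt12 {V : Type*} [Fintype V] [DecidableEq V] (G : SimpleGraph V)
    [DecidableRel G.Adj] (a b : ℕ) (ha : 1 ≤ a)
    (hnc : ¬ DColorable G a b)
    (hmin : ∀ v : V, DColorable (G.induce {v}ᶜ) a b)
    (F : Finset V) (hF : F ⊂ Finset.univ)
    (hFdeg : ∀ v : V, 2 * a + 2 * b ≤ G.degree v → v ∈ F) :
    ∃ H : Finset V, H.Nonempty ∧ (∀ v ∈ H, v ∉ F) ∧
      ∀ v ∈ H,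
        (a : ℤ) - ((G.degree v : ℤ) - (a + b)) ≤ ((G.neighborFinset v ∩ F).card : ℤ) ∧
        (a : ℤ) + b - ((G.degree v : ℤ) - (a + b)) ≤
          ((G.neighborFinset v ∩ (H ∪ F)).card : ℤ) := by
  classical
  obtain ⟨w1, -, hw1F⟩ := Finset.exists_of_ssubset hF
  set T : Finset (V × (V → Fin (a + b))) :=
    Finset.univ.filter (fun p => p.1 ∉ F ∧ Stmt12.PCol G a b p.1 p.2) with hT
  have hTmem : ∀ p : V × (V → Fin (a + b)),
      p ∈ T ↔ p.1 ∉ F ∧ Stmt12.PCol G a b p.1 p.2 := by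
    intro p; simp [hT]
  obtain ⟨f1, hf1⟩ := Stmt12.exists_pcol G a b ha hmin w1
  have hTne : T.Nonempty := ⟨(w1, f1), (hTmem _).2 ⟨hw1F, hf1⟩⟩
  obtain ⟨p₀, hp₀T, hp₀min⟩ := Finset.exists_min_image T
    (fun p => (Stmt12.satSet G a b F p.1 p.2).card) hTne
  set m := (Stmt12.satSet G a b F p₀.1 p₀.2).card with hm
  have hminc : ∀ w g, w ∉ F → Stmt12.PCol G a b w g →
      m ≤ (Stmt12.satSet G a b F w g).card :=
    fun w g h1 h2 => hp₀min (w, g) ((hTmem _).2 ⟨h1, h2⟩)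
  set H : Finset V := Finset.univ.filter
    (fun v => v ∉ F ∧ ∃ f, Stmt12.PCol G a b v f ∧ (Stmt12.satSet G a b F v f).card = m)
    with hH
  have hHmem : ∀ v : V, v ∈ H ↔ v ∉ F ∧
      ∃ f, Stmt12.PCol G a b v f ∧ (Stmt12.satSet G a b F v f).card = m := by
    intro v; simp [hH]
  refine ⟨H, ⟨p₀.1, (hHmem _).2 ⟨((hTmem _).1 hp₀T).1, p₀.2, ((hTmem _).1 hp₀T).2, rfl⟩⟩,
    fun v hv => ((hHmem _).1 hv).1, ?_⟩
  intro v hv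
  obtain ⟨hvF, f, hPf, hcf⟩ := (hHmem _).1 hv
  set Nc : Fin (a + b) → Finset V :=
    fun c => (G.neighborFinset v).filter (fun x => f x = c) with hNc
  have hNcmem : ∀ (c : Fin (a + b)) (x : V), x ∈ Nc c ↔ G.Adj v x ∧ f x = c := by
    intro c x; simp [hNc]
  have hdeg : G.degree v = ∑ c : Fin (a + b), (Nc c).card := by
    rw [← SimpleGraph.card_neighborFinset_eq_degree]
    exact Finset.card_eq_sum_card_fiberwise (fun x _ => Finset.mem_univ (f x))
  have h1c : ∀ c, 1 ≤ (Nc c).card := by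
    intro c
    by_contra h
    have hempty : Nc c = ∅ := Finset.card_eq_zero.mp (by omega)
    apply Stmt12.step_A hPf hnc c
    intro x hx hfx
    have hxm : x ∈ Nc c := (hNcmem c x).2 ⟨hx, hfx⟩
    rw [hempty] at hxm
    exact absurd hxm (Finset.notMem_empty x)
  -- each singleton 1-class fiber lies in F
  have hFone : ∀ c : Fin (a + b), (c : ℕ) < a → (Nc c).card = 1 →
      ∃ u ∈ G.neighborFinset v ∩ F, f u = c := by
    intro c hc hone
    obtain ⟨u, hu⟩ := Finset.card_eq_one.mp hone
    have humem := (hNcmem c u).1 (hu ▸ Finset.mem_singleton_self u)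
    have huniq : ∀ x, G.Adj v x → f x = c → x = u := by
      intro x h1x h2x
      have hxm : x ∈ Nc c := (hNcmem c x).2 ⟨h1x, h2x⟩
      rw [hu] at hxm
      exact Finset.mem_singleton.mp hxm
    by_cases huF : u ∈ F
    · exact ⟨u, Finset.mem_inter.mpr
        ⟨(SimpleGraph.mem_neighborFinset G v u).2 humem.1, huF⟩, humem.2⟩
    · exact absurd (Stmt12.step_D hPf hnc
        (fun w g hw hg => hcf.trans_le (hminc w g hw hg)) c hc humem.1 humem.2 huniq huF)
        not_false
  -- each singleton fiber lies in H ∪ F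
  have hone : ∀ c : Fin (a + b), (Nc c).card = 1 →
      ∃ u ∈ G.neighborFinset v ∩ (H ∪ F), f u = c := by
    intro c hone
    obtain ⟨u, hu⟩ := Finset.card_eq_one.mp hone
    have humem := (hNcmem c u).1 (hu ▸ Finset.mem_singleton_self u)
    have huniq : ∀ x, G.Adj v x → f x = c → x = u := by
      intro x h1x h2x
      have hxm : x ∈ Nc c := (hNcmem c x).2 ⟨h1x, h2x⟩
      rw [hu] at hxm
      exact Finset.mem_singleton.mp hxm
    by_cases hc : (c : ℕ) < a
    · obtain ⟨u', hu1', hu2'⟩ := hFone c hc hone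
      exact ⟨u', Finset.mem_inter.mpr ⟨(Finset.mem_inter.mp hu1').1,
        Finset.mem_union_right _ (Finset.mem_inter.mp hu1').2⟩, hu2'⟩
    · push_neg at hc
      by_cases huF : u ∈ F
      · exact ⟨u, Finset.mem_inter.mpr
          ⟨(SimpleGraph.mem_neighborFinset G v u).2 humem.1,
            Finset.mem_union_right _ huF⟩, humem.2⟩
      · obtain ⟨g, hPg, hsub⟩ := Stmt12.step_E (F := F) hPf c hc humem.1 humem.2 huniq
        have hle : (Stmt12.satSet G a b F u g).card ≤ m :=
          le_of_le_of_eq (Finset.card_le_card hsub) hcf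
        have hge : m ≤ (Stmt12.satSet G a b F u g).card := hminc u g huF hPg
        have huH : u ∈ H := (hHmem u).2 ⟨huF, g, hPg, le_antisymm hle hge⟩
        exact ⟨u, Finset.mem_inter.mpr
          ⟨(SimpleGraph.mem_neighborFinset G v u).2 humem.1,
            Finset.mem_union_left _ huH⟩, humem.2⟩
  -- the injections into the neighborhoods
  set S1 : Finset (Fin (a + b)) :=
    Finset.univ.filter (fun c => (c : ℕ) < a ∧ (Nc c).card = 1) with hS1
  set S : Finset (Fin (a + b)) :=
    Finset.univ.filter (fun c => (Nc c).card = 1) with hS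
  have hS1le : S1.card ≤ (G.neighborFinset v ∩ F).card := by
    apply Finset.card_le_card_of_injOn
      (fun c => if h : ∃ u ∈ G.neighborFinset v ∩ F, f u = c then h.choose else v)
    · intro c hcS
      simp only [Finset.mem_coe, hS1, Finset.mem_filter] at hcS ⊢
      have hex := hFone c hcS.2.1 hcS.2.2
      rw [dif_pos hex]
      exact hex.choose_spec.1
    · intro c1 hc1 c2 hc2 heq
      have hc1' : (c1 : ℕ) < a ∧ (Nc c1).card = 1 := by
        have h := hc1; rw [hS1] at h; simpa using h
      have hc2' : (c2 : ℕ) < a ∧ (Nc c2).card = 1 := by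
        have h := hc2; rw [hS1] at h; simpa using h
      have hex1 := hFone c1 hc1'.1 hc1'.2
      have hex2 := hFone c2 hc2'.1 hc2'.2
      simp only [dif_pos hex1, dif_pos hex2] at heq
      rw [← hex1.choose_spec.2, ← hex2.choose_spec.2, heq]
  have hSle : S.card ≤ (G.neighborFinset v ∩ (H ∪ F)).card := by
    apply Finset.card_le_card_of_injOn
      (fun c => if h : ∃ u ∈ G.neighborFinset v ∩ (H ∪ F), f u = c then h.choose else v)
    · intro c hcS
      simp only [Finset.mem_coe, hS, Finset.mem_filter] at hcS ⊢
      have hex := hone c hcS.2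
      rw [dif_pos hex]
      exact hex.choose_spec.1
    · intro c1 hc1 c2 hc2 heq
      have hc1' : (Nc c1).card = 1 := by
        have h := hc1; rw [hS] at h; simpa using h
      have hc2' : (Nc c2).card = 1 := by
        have h := hc2; rw [hS] at h; simpa using h
      have hex1 := hone c1 hc1'
      have hex2 := hone c2 hc2'
      simp only [dif_pos hex1, dif_pos hex2] at heq
      rw [← hex1.choose_spec.2, ← hex2.choose_spec.2, heq]
  -- the two counting bounds
  have key1 : 2 * a + b ≤ G.degree v + S1.card := by
    have hpt : ∀ c : Fin (a + b), (if (c : ℕ) < a then 2 else 1) ≤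
        (Nc c).card + (if ((c : ℕ) < a ∧ (Nc c).card = 1) then 1 else 0) := by
      intro c
      have := h1c c
      split_ifs <;> omega
    have hsum := Finset.sum_le_sum (fun c (_ : c ∈ Finset.univ) => hpt c)
    rw [Finset.sum_add_distrib] at hsum
    have hl : ∑ c : Fin (a + b), (if (c : ℕ) < a then 2 else 1) = 2 * a + b := by
      have hpt2 : ∀ c : Fin (a + b), (if (c : ℕ) < a then 2 else 1) =
          (if (c : ℕ) < a then 1 else 0) + 1 := by
        intro c; split_ifs <;> rfl
      rw [Finset.sum_congr rfl (fun c _ => hpt2 c), Finset.sum_add_distrib,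
        ← Finset.card_filter, Stmt12.card_low a b, Finset.sum_const,
        Finset.card_univ, Fintype.card_fin, smul_eq_mul]
      omega
    have hr : ∑ c : Fin (a + b),
        (if ((c : ℕ) < a ∧ (Nc c).card = 1) then 1 else 0) = S1.card := by
      rw [hS1, Finset.card_filter]
    rw [hl, hr, ← hdeg] at hsum
    exact hsum
  have key2 : 2 * (a + b) ≤ G.degree v + S.card := by
    have hpt : ∀ c : Fin (a + b),
        2 ≤ (Nc c).card + (if (Nc c).card = 1 then 1 else 0) := by
      intro c
      have := h1c c
      split_ifs <;> omega
    have hsum := Finset.sum_le_sum (fun c (_ : c ∈ Finset.univ) => hpt c)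
    rw [Finset.sum_add_distrib] at hsum
    have hl : ∑ _c : Fin (a + b), 2 = 2 * (a + b) := by
      rw [Finset.sum_const, Finset.card_univ, Fintype.card_fin, smul_eq_mul]
      omega
    have hr : ∑ c : Fin (a + b), (if (Nc c).card = 1 then 1 else 0) = S.card := by
      rw [hS, Finset.card_filter]
    rw [hl, hr, ← hdeg] at hsum
    exact hsum
  constructor
  · have h1 := hS1le
    have h2 := key1
    omega
  · have h1 := hSle
    have h2 := key2
    omega
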